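/- Let ℓ ∈ ℤ + 1/2, ℓ ≥ 1/2, and d = p + q ≥ 3. In the universal enveloping algebra of Gal_ℓ(p,q), the elements Ẽ_{ij} = M E_{ij} + Σ_{s=0}^{ℓ-1/2} ((−1)^{(2ℓ−1)/2 + s}/(s!(2ℓ−s)!)) (P_{s,i}P_{2ℓ−s,j} − P_{s,j}P_{2ℓ−s,i}), for 1 ≤ i < j ≤ d, commute with all generators P_{n,k} (0 ≤ n ≤ 2ℓ, 1 ≤ k ≤ d). -/

import Mathlib

/-- In the universal enveloping algebra of `Gal_ℓ(p,q)` (`ℓ = t + 1/2`),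
the elements
`Ẽ_{ij} = M E_{ij} + Σ_{s=0}^{ℓ-1/2} ((-1)^{(2ℓ-1)/2+s}/(s!(2ℓ-s)!)) (P_{s,i}P_{2ℓ-s,j} - P_{s,j}P_{2ℓ-s,i})`
for `i < j` commute with all the generators `P_{n,k}`. -/
theorem stmt8 (A : Type) [Ring A] [Algebra ℝ A] (d t p' q' : ℕ) (hd : 3 ≤ d)
    (hpq : p' + q' = d)
    (XM : A) (XE : Fin d → Fin d → A) (XP : ℕ → Fin d → A)
    (gm : Fin d → ℝ) (hgm : ∀ i, gm i = if (i : ℕ) < p' then 1 else -1)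
    (hXP0 : ∀ n, 2 * t + 1 < n → ∀ i, XP n i = 0)
    (hEP : ∀ (i j : Fin d) (n : ℕ), n ≤ 2 * t + 1 → ∀ k,
      ⁅XE i j, XP n k⁆ = (if k = i then gm i else 0) • XP n j
        - (if k = j then gm j else 0) • XP n i)
    (hPP : ∀ m ≤ 2 * t + 1, ∀ n ≤ 2 * t + 1, ∀ i j,
      ⁅XP m i, XP n j⁆ =
        (if i = j ∧ m + n = 2 * t + 1 then
          gm i * (-1 : ℝ) ^ (m + t + 1) * (2 * t + 1 - m).factorial * m.factorial
        else 0) • XM)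
    (hM : ∀ a : A, ⁅XM, a⁆ = 0) :
    ∀ (i j : Fin d), i < j → ∀ n ≤ 2 * t + 1, ∀ k : Fin d,
      ⁅XM * XE i j + ∑ s ∈ Finset.range (t + 1),
          ((-1 : ℝ) ^ (t + s) / (s.factorial * (2 * t + 1 - s).factorial)) •
            (XP s i * XP (2 * t + 1 - s) j - XP s j * XP (2 * t + 1 - s) i),
        XP n k⁆ = 0 := by
  intro i j hij n hn k
  have hij' : i ≠ j := ne_of_lt hij
  -- basic bracket identities in an associative ring
  have hmul : ∀ a b c : A, ⁅a * b, c⁆ = a * ⁅b, c⁆ + ⁅a, c⁆ * b := by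
    intro a b c; simp only [Ring.lie_def]; noncomm_ring
  have hcomm : ∀ a : A, XM * a = a * XM := by
    intro a
    have h := hM a
    rw [Ring.lie_def, sub_eq_zero] at h
    exact h
  have hsum : ∀ (f : ℕ → A) (c : A),
      ⁅∑ s ∈ Finset.range (t + 1), f s, c⁆ = ∑ s ∈ Finset.range (t + 1), ⁅f s, c⁆ := by
    intro f c
    simp only [Ring.lie_def, Finset.sum_mul, Finset.mul_sum, ← Finset.sum_sub_distrib]
  -- scalar computations
  have scalA : ∀ (g : ℝ) (a b : ℕ), a + b = 2 * t + 1 →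
      ((-1 : ℝ) ^ (t + a) / (a.factorial * b.factorial)) *
        (g * (-1 : ℝ) ^ (b + t + 1) * a.factorial * b.factorial) = g := by
    intro g a b hab
    have f1 : ((a.factorial : ℝ)) ≠ 0 := Nat.cast_ne_zero.mpr a.factorial_ne_zero
    have f2 : ((b.factorial : ℝ)) ≠ 0 := Nat.cast_ne_zero.mpr b.factorial_ne_zero
    have hp : (-1 : ℝ) ^ (t + a) * (-1 : ℝ) ^ (b + t + 1) = 1 := by
      rw [← pow_add]
      exact Even.neg_one_pow ⟨2 * t + 1, by omega⟩
    rw [div_mul_eq_mul_div, div_eq_iff (mul_ne_zero f1 f2)]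
    linear_combination (g * (a.factorial : ℝ) * (b.factorial : ℝ)) * hp
  have scalB : ∀ (g : ℝ) (a b : ℕ),
      ((-1 : ℝ) ^ (t + a) / (a.factorial * b.factorial)) *
        (g * (-1 : ℝ) ^ (a + t + 1) * b.factorial * a.factorial) = -g := by
    intro g a b
    have f1 : ((a.factorial : ℝ)) ≠ 0 := Nat.cast_ne_zero.mpr a.factorial_ne_zero
    have f2 : ((b.factorial : ℝ)) ≠ 0 := Nat.cast_ne_zero.mpr b.factorial_ne_zero
    have hp : (-1 : ℝ) ^ (t + a) * (-1 : ℝ) ^ (a + t + 1) = -1 := by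
      rw [← pow_add]
      exact Odd.neg_one_pow ⟨t + a, by ring⟩
    rw [div_mul_eq_mul_div, div_eq_iff (mul_ne_zero f1 f2)]
    linear_combination (g * (a.factorial : ℝ) * (b.factorial : ℝ)) * hp
  -- the key auxiliary computation
  have aux : ∀ x y : Fin d,
      (∑ s ∈ Finset.range (t + 1),
        ((-1 : ℝ) ^ (t + s) / (s.factorial * (2 * t + 1 - s).factorial)) •
          ⁅XP s x * XP (2 * t + 1 - s) y, XP n k⁆)
      = (if y = k ∧ n ≤ t then gm y • (XM * XP n x) else 0)
        - (if x = k ∧ t < n then gm x • (XM * XP n y) else 0) := by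
    intro x y
    have step : ∀ s ∈ Finset.range (t + 1),
        ((-1 : ℝ) ^ (t + s) / (s.factorial * (2 * t + 1 - s).factorial)) •
          ⁅XP s x * XP (2 * t + 1 - s) y, XP n k⁆
        = (if s = n then (if y = k then gm y • (XM * XP n x) else 0) else 0)
          + (if s = 2 * t + 1 - n ∧ t < n then
              (if x = k then -(gm x • (XM * XP n y)) else 0) else 0) := by
      intro s hs
      rw [Finset.mem_range, Nat.lt_succ_iff] at hs
      rw [hmul, hPP (2 * t + 1 - s) (by omega) n hn, hPP s (by omega) n hn,
        mul_smul_comm, smul_mul_assoc, smul_add, smul_smul, smul_smul]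
      by_cases h1 : s = n
      · rw [h1] at hs ⊢
        rw [if_congr (and_iff_left (show 2 * t + 1 - n + n = 2 * t + 1 by omega)) rfl rfl,
          if_neg (fun h : x = k ∧ n + n = 2 * t + 1 => by omega),
          if_neg (show ¬(n = 2 * t + 1 - n ∧ t < n) from fun h => by omega),
          show 2 * t + 1 - (2 * t + 1 - n) = n from by omega]
        by_cases hyk : y = k
        · rw [if_pos hyk, if_pos hyk, mul_zero, zero_smul, add_zero, add_zero,
            hcomm (XP n x), if_pos rfl]
          congr 1
          exact scalA (gm y) n (2 * t + 1 - n) (by omega)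
        · rw [if_neg hyk, if_neg hyk]; simp
      · rw [if_neg (fun h : y = k ∧ 2 * t + 1 - s + n = 2 * t + 1 => h1 (by omega))]
        by_cases h2 : s = 2 * t + 1 - n
        · have htn : t < n := by omega
          rw [if_congr (and_iff_left (show s + n = 2 * t + 1 by omega)) rfl rfl,
            if_neg h1, if_pos (⟨h2, htn⟩ : s = 2 * t + 1 - n ∧ t < n),
            show XP (2 * t + 1 - s) y = XP n y from by rw [show 2 * t + 1 - s = n from by omega]]
          by_cases hxk : x = k
          · rw [if_pos hxk, if_pos hxk, mul_zero, zero_smul, zero_add, zero_add, ← neg_smul]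
            congr 1
            exact scalB (gm x) s (2 * t + 1 - s)
          · rw [if_neg hxk, if_neg hxk]; simp
        · rw [if_neg (fun h : x = k ∧ s + n = 2 * t + 1 => h2 (by omega)),
            if_neg h1, if_neg (fun h : s = 2 * t + 1 - n ∧ t < n => h2 h.1)]
          simp
    rw [Finset.sum_congr rfl step, Finset.sum_add_distrib]
    simp only [ite_and]
    rw [Finset.sum_ite_eq' (Finset.range (t + 1)) n
        (fun _ => if y = k then gm y • (XM * XP n x) else 0),
      Finset.sum_ite_eq' (Finset.range (t + 1)) (2 * t + 1 - n)
        (fun _ => if t < n then (if x = k then -(gm x • (XM * XP n y)) else 0) else 0),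
      ]
    simp only [Finset.mem_range, Nat.lt_succ_iff]
    by_cases hnt : n ≤ t
    · have h1 : ¬ 2 * t + 1 - n ≤ t := by omega
      have h2 : ¬ t < n := by omega
      simp [hnt, h1, h2]
    · have htn : t < n := by omega
      have h1 : 2 * t + 1 - n ≤ t := by omega
      by_cases hxk : x = k
      · simp [hnt, h1, htn, hxk]
      · simp [hnt, h1, htn, hxk]
  -- now assemble
  letI := LieRing.ofAssociativeRing (A := A)
  letI := LieAlgebra.ofAssociativeAlgebra (R := ℝ) (A := A)
  rw [add_lie, hmul, hM, zero_mul, add_zero, hEP i j n hn k, hsum,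
    show (fun s => ⁅((-1 : ℝ) ^ (t + s) / (s.factorial * (2 * t + 1 - s).factorial)) •
            (XP s i * XP (2 * t + 1 - s) j - XP s j * XP (2 * t + 1 - s) i), XP n k⁆)
      = (fun s => ((-1 : ℝ) ^ (t + s) / (s.factorial * (2 * t + 1 - s).factorial)) •
            ⁅XP s i * XP (2 * t + 1 - s) j, XP n k⁆
          - ((-1 : ℝ) ^ (t + s) / (s.factorial * (2 * t + 1 - s).factorial)) •
            ⁅XP s j * XP (2 * t + 1 - s) i, XP n k⁆) from by
      funext s
      rw [smul_lie, sub_lie, smul_sub],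
    Finset.sum_sub_distrib, aux i j, aux j i]
  rw [mul_sub, mul_smul_comm, mul_smul_comm]
  by_cases hnt : n ≤ t
  · have h2 : ¬ t < n := by omega
    rw [if_neg (fun h : i = k ∧ t < n => h2 h.2), if_neg (fun h : j = k ∧ t < n => h2 h.2),
      sub_zero, sub_zero]
    by_cases hki : k = i
    · have hkj : ¬ k = j := fun h => hij' (hki.symm.trans h)
      rw [if_pos hki, if_neg hkj,
        if_neg (show ¬(j = k ∧ n ≤ t) from fun h => hkj (h.1.symm : k = j)),
        if_pos (⟨hki.symm, hnt⟩ : i = k ∧ n ≤ t), zero_smul, sub_zero, zero_sub]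
      abel
    · rw [if_neg hki, if_neg (fun h : i = k ∧ n ≤ t => hki h.1.symm), zero_smul]
      by_cases hkj : k = j
      · rw [if_pos hkj, if_pos (⟨hkj.symm, hnt⟩ : j = k ∧ n ≤ t)]
        abel
      · rw [if_neg hkj, if_neg (fun h : j = k ∧ n ≤ t => hkj h.1.symm), zero_smul]
        abel
  · have htn : t < n := by omega
    rw [if_neg (fun h : j = k ∧ n ≤ t => hnt h.2), if_neg (fun h : i = k ∧ n ≤ t => hnt h.2),
      zero_sub, zero_sub]
    by_cases hki : k = i
    · have hkj : ¬ k = j := fun h => hij' (hki.symm.trans h)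
      rw [if_pos hki, if_neg hkj,
        if_neg (show ¬(j = k ∧ t < n) from fun h => hkj (h.1.symm : k = j)),
        if_pos (⟨hki.symm, htn⟩ : i = k ∧ t < n), zero_smul, neg_zero, sub_zero]
      abel
    · rw [if_neg hki, if_neg (fun h : i = k ∧ t < n => hki h.1.symm), zero_smul, neg_zero]
      by_cases hkj : k = j
      · rw [if_pos hkj, if_pos (⟨hkj.symm, htn⟩ : j = k ∧ t < n)]
        abel
      · rw [if_neg hkj, if_neg (fun h : j = k ∧ t < n => hkj h.1.symm), zero_smul, neg_zero]
        abel
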